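/- For a finite multicomplex M, the spectrum (multiset of eigenvalues, ignoring zeros) of the degree-i Laplacian splits as a multiset sum over square parts: s'_i(M) = Σ_{p²∈M, 2deg(p)≤i} s'_{i−2deg(p)}(M^{(p²)}), and similarly for s''_i and s^{tot}_i. -/

import Mathlib

open Finsupp

/-- A monomial in variables `x_1 < ⋯ < x_n`, given by its exponent vector. -/
abbrev Mon (n : ℕ) := Fin n → ℕ

/-- Total degree of a monomial. -/
def tdeg {n : ℕ} (m : Mon n) : ℕ := ∑ i, m i

/-- Divisibility of monomials. -/
def mdvd {n : ℕ} (m t : Mon n) : Prop := ∀ i, m i ≤ t i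

/-- A multicomplex: a finite set of monomials closed under taking divisors. -/
def IsMulticomplex {n : ℕ} (M : Finset (Mon n)) : Prop :=
  ∀ m t : Mon n, mdvd m t → t ∈ M → m ∈ M

/-- Square-free monomials. -/
def SqFree {n : ℕ} (m : Mon n) : Prop := ∀ i, m i ≤ 1

def decr {n : ℕ} (m : Mon n) (j : Fin n) : Mon n := Function.update m j (m j - 1)
def incr {n : ℕ} (m : Mon n) (j : Fin n) : Mon n := Function.update m j (m j + 1)
def unitMon {n : ℕ} (i : Fin n) : Mon n := fun j => if j = i then 1 else 0
/-- Sum of the exponents of the variables preceding `j`. -/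
def presum {n : ℕ} (m : Mon n) (j : Fin n) : ℕ := ∑ i ∈ Finset.univ.filter (· < j), m i
/-- Multiplication by the square `p²`. -/
def mulSq {n : ℕ} (p m : Mon n) : Mon n := fun i => 2 * p i + m i

/-- The Björner–Vrećica boundary operator on `ℤ[X]`. -/
noncomputable def bdry (n : ℕ) : (Mon n →₀ ℤ) →ₗ[ℤ] (Mon n →₀ ℤ) :=
  Finsupp.lsum ℤ fun m => LinearMap.toSpanSingleton ℤ _
    (∑ j, (((-1 : ℤ) ^ presum m j) * ((m j % 2 : ℕ) : ℤ)) • Finsupp.single (decr m j) (1 : ℤ))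

/-- The Björner–Vrećica boundary operator, with real coefficients. -/
noncomputable def bdryR (n : ℕ) : (Mon n →₀ ℝ) →ₗ[ℝ] (Mon n →₀ ℝ) :=
  Finsupp.lsum ℝ fun m => LinearMap.toSpanSingleton ℝ _
    (∑ j, (((-1 : ℝ) ^ presum m j) * ((m j % 2 : ℕ) : ℝ)) • Finsupp.single (decr m j) (1 : ℝ))

/-- The dual boundary operator `∂*` of the multicomplex `M`. -/
noncomputable def upL {n : ℕ} (M : Finset (Mon n)) : (Mon n →₀ ℝ) →ₗ[ℝ] (Mon n →₀ ℝ) :=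
  Finsupp.lsum ℝ fun m => LinearMap.toSpanSingleton ℝ _
    (∑ j, (if m j % 2 = 0 ∧ incr m j ∈ M then ((-1 : ℝ) ^ presum m j) else 0) •
      Finsupp.single (incr m j) (1 : ℝ))

/-- Inner product making the monomials an orthonormal basis. -/
noncomputable def dot {n : ℕ} (f g : Mon n →₀ ℝ) : ℝ := ∑ m ∈ f.support, f m * g m

/-- Degree-`d` part of `M`. -/
def Mdeg {n : ℕ} (M : Finset (Mon n)) (d : ℕ) : Finset (Mon n) :=
  M.filter fun m => tdeg m = d

/-- `ℝM_d`, the span of the degree-`d` monomials of `M`. -/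
noncomputable def Vdeg {n : ℕ} (M : Finset (Mon n)) (d : ℕ) : Submodule ℝ (Mon n →₀ ℝ) :=
  Submodule.span ℝ ((fun m => Finsupp.single m (1 : ℝ)) '' ↑(Mdeg M d))

/-- The simplicial complex `M^{(p²)} = {q squarefree : p²q ∈ M}`. -/
def Mp2 {n : ℕ} (M : Finset (Mon n)) (p : Mon n) : Finset (Mon n) :=
  M.filter fun q => (∀ i, q i ≤ 1) ∧ mulSq p q ∈ M

/-- The set of monomials `p` with `p² ∈ M`. -/
def sqrts {n : ℕ} (M : Finset (Mon n)) : Finset (Mon n) :=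
  (M.filter fun m => ∀ i, m i % 2 = 0).image fun m i => m i / 2

/-- Laplacian `L' = ∂∂*` of the multicomplex `M`. -/
noncomputable def lapUp {n : ℕ} (M : Finset (Mon n)) : (Mon n →₀ ℝ) →ₗ[ℝ] (Mon n →₀ ℝ) :=
  bdryR n ∘ₗ upL M

/-- Laplacian `L'' = ∂*∂` of the multicomplex `M`. -/
noncomputable def lapDown {n : ℕ} (M : Finset (Mon n)) : (Mon n →₀ ℝ) →ₗ[ℝ] (Mon n →₀ ℝ) :=
  upL M ∘ₗ bdryR n

/-- Multiplicity of `μ` as an eigenvalue of an operator `T` on `ℝM_d`. -/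
noncomputable def multOf {n : ℕ} (M : Finset (Mon n)) (d : ℕ)
    (T : (Mon n →₀ ℝ) →ₗ[ℝ] (Mon n →₀ ℝ)) (μ : ℝ) : ℕ :=
  Module.finrank ℝ ↥(LinearMap.ker (T - μ • LinearMap.id) ⊓ Vdeg M d)

/-- Multiplicity of `μ` in the spectrum `s'_d` of `L'_d`. -/
noncomputable def multL' {n : ℕ} (M : Finset (Mon n)) (d : ℕ) (μ : ℝ) : ℕ :=
  multOf M d (lapUp M) μ

/-- Multiplicity of `μ` in the spectrum `s''_d` of `L''_d`. -/
noncomputable def multL'' {n : ℕ} (M : Finset (Mon n)) (d : ℕ) (μ : ℝ) : ℕ :=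
  multOf M d (lapDown M) μ

/-- Multiplicity of `μ` in the spectrum `s^{tot}_d` of `L_d = L'_d + L''_d`. -/
noncomputable def multL {n : ℕ} (M : Finset (Mon n)) (d : ℕ) (μ : ℝ) : ℕ :=
  multOf M d (lapUp M + lapDown M) μ

/-- Shifted multicomplex (relative to its support). -/
def Shifted {n : ℕ} (N : Finset (Mon n)) : Prop :=
  ∀ (m : Mon n) (i j : Fin n), i < j → incr m j ∈ N → unitMon i ∈ N → incr m i ∈ N

/-- Shifted simplicial complex (relative to its support). -/
def ShiftedSimp {n : ℕ} (N : Finset (Mon n)) : Prop :=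
  ∀ (m : Mon n) (i j : Fin n), i < j → incr m j ∈ N → unitMon i ∈ N → m i = 0 →
    incr m i ∈ N

/-- `d_j`: the number of monomials of degree `k` in `N` divisible by `x_j`. -/
def dseq {n : ℕ} (N : Finset (Mon n)) (k : ℕ) (j : Fin n) : ℕ :=
  ((Mdeg N k).filter fun m => 1 ≤ m j).card

/-- The `j`-th entry of the conjugate partition `d_k^T(N)`. -/
def dconj {n : ℕ} (N : Finset (Mon n)) (k : ℕ) (j : ℕ) : ℕ :=
  (Finset.univ.filter fun i : Fin n => j ≤ dseq N k i).card

namespace Aux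
variable {n : ℕ}

def half (m : Mon n) : Mon n := fun i => m i / 2
def par (m : Mon n) : Mon n := fun i => m i % 2

lemma mulSq_half_par (m : Mon n) : mulSq (half m) (par m) = m := by
  funext i; simp only [mulSq, half, par]; omega

lemma sqFree_par (m : Mon n) : SqFree (par m) := fun i => by simp only [par]; omega

lemma half_mulSq (p : Mon n) {q : Mon n} (hq : SqFree q) : half (mulSq p q) = p := by
  funext i; have := hq i; simp only [half, mulSq]; omega

lemma mulSq_injective (p : Mon n) : Function.Injective (mulSq p) := by
  intro a b h
  funext i
  have : 2 * p i + a i = 2 * p i + b i := congrFun h i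
  omega

lemma tdeg_mulSq (p q : Mon n) : tdeg (mulSq p q) = 2 * tdeg p + tdeg q := by
  simp only [tdeg, mulSq, Finset.sum_add_distrib, Finset.mul_sum]

lemma sqfree_of_half_mulSq {p q : Mon n} (h : half (mulSq p q) = p) : SqFree q := by
  intro i
  have := congrFun h i
  simp only [half, mulSq] at this
  omega

lemma incr_mulSq (p q : Mon n) (j : Fin n) : incr (mulSq p q) j = mulSq p (incr q j) := by
  funext i
  by_cases h : i = j
  · subst h; simp only [incr, mulSq, Function.update_self]; omega
  · simp [incr, mulSq, Function.update_of_ne h]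

lemma decr_mulSq (p : Mon n) {q : Mon n} (j : Fin n) (h : 1 ≤ q j) :
    decr (mulSq p q) j = mulSq p (decr q j) := by
  funext i
  by_cases hij : i = j
  · subst hij; simp only [decr, mulSq, Function.update_self]; omega
  · simp [decr, mulSq, Function.update, hij]

lemma presum_mulSq (p q : Mon n) (j : Fin n) :
    presum (mulSq p q) j = 2 * presum p j + presum q j := by
  simp only [presum, mulSq, Finset.sum_add_distrib, Finset.mul_sum]

lemma neg_one_pow_presum_mulSq (p q : Mon n) (j : Fin n) :
    ((-1 : ℝ)) ^ presum (mulSq p q) j = (-1 : ℝ) ^ presum q j := by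
  rw [presum_mulSq, pow_add, pow_mul, neg_one_sq, one_pow, one_mul]

lemma sqFree_decr {m : Mon n} (hm : SqFree m) (j : Fin n) : SqFree (decr m j) := by
  intro i
  by_cases h : i = j <;> simp only [decr, Function.update, h] <;> simp <;> [skip; exact hm i]
  · have := hm j; omega

lemma mdvd_mulSq (p q : Mon n) : mdvd q (mulSq p q) := fun i => by simp [mulSq]

/-- membership lemmas -/
lemma half_mem_sqrts {M : Finset (Mon n)} (hM : IsMulticomplex M) {m : Mon n} (hm : m ∈ M) :
    half m ∈ sqrts M := by
  have h2 : (fun i => 2 * (m i / 2)) ∈ M := hM _ m (fun i => by omega) hm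
  refine Finset.mem_image.2 ⟨_, Finset.mem_filter.2 ⟨h2, fun i => by omega⟩, ?_⟩
  funext i; simp only [half]; omega

lemma par_mem_Mp2 {M : Finset (Mon n)} (hM : IsMulticomplex M) {m : Mon n} (hm : m ∈ M) :
    par m ∈ Mp2 M (half m) := by
  refine Finset.mem_filter.2 ⟨hM _ m (fun i => by simp only [par]; omega) hm,
    fun i => by simp only [par]; omega, ?_⟩
  rw [mulSq_half_par]; exact hm

lemma Mp2_mulSq_mem {M : Finset (Mon n)} {p q : Mon n} (hq : q ∈ Mp2 M p) :
    mulSq p q ∈ M := (Finset.mem_filter.1 hq).2.2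

lemma Mp2_sqFree {M : Finset (Mon n)} {p q : Mon n} (hq : q ∈ Mp2 M p) : SqFree q :=
  (Finset.mem_filter.1 hq).2.1

/-- `Vdeg` is the supported submodule. -/
lemma Vdeg_eq (N : Finset (Mon n)) (d : ℕ) :
    Vdeg N d = Finsupp.supported ℝ ℝ ↑(Mdeg N d) := by
  rw [Vdeg, Finsupp.supported_eq_span_single]

lemma mem_Vdeg {N : Finset (Mon n)} {d : ℕ} {f : Mon n →₀ ℝ} :
    f ∈ Vdeg N d ↔ ∀ m ∈ f.support, m ∈ Mdeg N d := by
  rw [Vdeg_eq, Finsupp.mem_supported]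
  constructor
  · intro h m hm; exact h hm
  · intro h m hm; exact h m hm

end Aux
namespace Aux
variable {n : ℕ}

noncomputable def Phi (p : Mon n) : (Mon n →₀ ℝ) →ₗ[ℝ] (Mon n →₀ ℝ) :=
  Finsupp.lmapDomain ℝ ℝ (mulSq p)

lemma Phi_apply (p : Mon n) (f : Mon n →₀ ℝ) : Phi p f = Finsupp.mapDomain (mulSq p) f := rfl

lemma Phi_injective (p : Mon n) : Function.Injective (Phi p) :=
  Finsupp.mapDomain_injective (mulSq_injective p)

lemma Phi_single (p q : Mon n) (c : ℝ) : Phi p (Finsupp.single q c) = Finsupp.single (mulSq p q) c :=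
  Finsupp.mapDomain_single

lemma bdryR_single (m : Mon n) :
    bdryR n (Finsupp.single m 1) =
      ∑ j, (((-1 : ℝ) ^ presum m j) * ((m j % 2 : ℕ) : ℝ)) • Finsupp.single (decr m j) (1 : ℝ) := by
  rw [bdryR, Finsupp.lsum_single, LinearMap.toSpanSingleton_apply_one]

lemma upL_single (M : Finset (Mon n)) (m : Mon n) :
    upL M (Finsupp.single m 1) =
      ∑ j, (if m j % 2 = 0 ∧ incr m j ∈ M then ((-1 : ℝ) ^ presum m j) else 0) •
        Finsupp.single (incr m j) (1 : ℝ) := by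
  rw [upL, Finsupp.lsum_single, LinearMap.toSpanSingleton_apply_one]

/-- C1 : boundary commutes with multiplication by `p²` on squarefree monomials. -/
lemma bdryR_single_mulSq (p : Mon n) {q : Mon n} (hq : SqFree q) :
    bdryR n (Finsupp.single (mulSq p q) 1) = Phi p (bdryR n (Finsupp.single q 1)) := by
  rw [bdryR_single, bdryR_single, map_sum]
  refine Finset.sum_congr rfl fun j _ => ?_
  rw [map_smul, Phi_single]
  have hm2 : mulSq p q j % 2 = q j % 2 := by simp only [mulSq]; omega
  rcases Nat.lt_or_ge (q j) 1 with h | h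
  · have h0 : q j = 0 := by omega
    simp [hm2, h0]
  · have h1 : q j = 1 := le_antisymm (hq j) h
    rw [decr_mulSq p j h, hm2, neg_one_pow_presum_mulSq]

/-- C2 : the dual boundary of `M` corresponds to that of `Mp2 M p`. -/
lemma upL_single_mulSq {M : Finset (Mon n)} (hM : IsMulticomplex M) (p : Mon n)
    {q : Mon n} (hq : SqFree q) :
    upL M (Finsupp.single (mulSq p q) 1) = Phi p (upL (Mp2 M p) (Finsupp.single q 1)) := by
  rw [upL_single, upL_single, map_sum]
  refine Finset.sum_congr rfl fun j _ => ?_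
  rw [map_smul, Phi_single, incr_mulSq, neg_one_pow_presum_mulSq]
  have hm2 : mulSq p q j % 2 = q j % 2 := by simp only [mulSq]; omega
  rw [hm2]
  congr 1
  by_cases h0 : q j % 2 = 0
  · have hqj : q j = 0 := by have := hq j; omega
    have hcond : mulSq p (incr q j) ∈ M ↔ incr q j ∈ Mp2 M p := by
      constructor
      · intro hmem
        refine Finset.mem_filter.2 ⟨hM _ _ (mdvd_mulSq p _) hmem, ?_, hmem⟩
        intro i
        by_cases hij : i = j
        · subst hij; simp [incr, Function.update, hqj]
        · simp only [incr, Function.update, hij]; exact hq i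
      · intro hmem; exact (Finset.mem_filter.1 hmem).2.2
    simp only [h0, true_and]
    by_cases hc : incr q j ∈ Mp2 M p
    · rw [if_pos (hcond.2 hc), if_pos hc]
    · rw [if_neg (fun hh => hc (hcond.1 hh)), if_neg hc]
  · simp [h0]

end Aux
namespace Aux
variable {n : ℕ}

/-- All monomials in the support are squarefree. -/
def SupSq (f : Mon n →₀ ℝ) : Prop := ∀ m ∈ f.support, SqFree m

lemma ext_sqfree (A B : (Mon n →₀ ℝ) →ₗ[ℝ] (Mon n →₀ ℝ)) {f : Mon n →₀ ℝ}
    (h : ∀ q ∈ f.support, A (Finsupp.single q 1) = B (Finsupp.single q 1)) : A f = B f := by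
  have hf : f = f.sum fun q c => c • Finsupp.single q (1 : ℝ) := by
    conv_lhs => rw [← Finsupp.sum_single f]
    refine Finsupp.sum_congr fun q _ => ?_
    rw [Finsupp.smul_single, smul_eq_mul, mul_one]
  rw [hf, map_finsuppSum, map_finsuppSum]
  exact Finsupp.sum_congr fun q hq => by rw [map_smul, map_smul, h q hq]

lemma supp_upL {N : Finset (Mon n)} {f : Mon n →₀ ℝ} : ∀ m ∈ (upL N f).support, m ∈ N := by
  intro m hm
  have : upL N f = f.sum fun q c => c • ∑ j, (if q j % 2 = 0 ∧ incr q j ∈ N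
      then ((-1 : ℝ) ^ presum q j) else 0) • Finsupp.single (incr q j) (1 : ℝ) := by
    rw [upL, Finsupp.lsum_apply]
    exact Finsupp.sum_congr fun q _ => rfl
  rw [this] at hm
  have hm' := Finsupp.support_sum hm
  rw [Finset.mem_biUnion] at hm'
  obtain ⟨q, _, hq⟩ := hm'
  have hq2 := Finsupp.support_smul hq
  have hq3 := Finsupp.mem_support_finset_sum _ hq2
  obtain ⟨j, _, hj⟩ := hq3
  by_cases hc : q j % 2 = 0 ∧ incr q j ∈ N
  · rw [if_pos hc] at hj
    have := Finsupp.support_smul hj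
    have := Finsupp.support_single_subset this
    rw [Finset.mem_singleton.1 this]
    exact hc.2
  · rw [if_neg hc, zero_smul] at hj
    simp at hj

lemma supp_bdryR {f : Mon n →₀ ℝ} (hf : SupSq f) : SupSq (bdryR n f) := by
  intro m hm
  have : bdryR n f = f.sum fun q c => c • ∑ j,
      (((-1 : ℝ) ^ presum q j) * ((q j % 2 : ℕ) : ℝ)) • Finsupp.single (decr q j) (1 : ℝ) := by
    rw [bdryR, Finsupp.lsum_apply]
    exact Finsupp.sum_congr fun q _ => rfl
  rw [this] at hm
  have hm' := Finsupp.support_sum hm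
  rw [Finset.mem_biUnion] at hm'
  obtain ⟨q, hqf, hq⟩ := hm'
  have hq2 := Finsupp.support_smul hq
  have hq3 := Finsupp.mem_support_finset_sum _ hq2
  obtain ⟨j, _, hj⟩ := hq3
  have := Finsupp.support_smul hj
  have := Finsupp.support_single_subset this
  rw [Finset.mem_singleton.1 this]
  exact sqFree_decr (hf q hqf) j

lemma supsq_of_mem_Mp2 {M : Finset (Mon n)} {p : Mon n} {f : Mon n →₀ ℝ}
    (h : ∀ m ∈ f.support, m ∈ Mp2 M p) : SupSq f := fun m hm => Mp2_sqFree (h m hm)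

/-- key commutation for `upL`. -/
lemma upL_comm {M : Finset (Mon n)} (hM : IsMulticomplex M) (p : Mon n) {f : Mon n →₀ ℝ}
    (hf : SupSq f) : upL M (Phi p f) = Phi p (upL (Mp2 M p) f) := by
  have := ext_sqfree ((upL M).comp (Phi p)) ((Phi p).comp (upL (Mp2 M p))) (f := f)
    (fun q hq => by
      simp only [LinearMap.comp_apply, Phi_single]
      exact upL_single_mulSq hM p (hf q hq))
  simpa using this

lemma bdryR_comm (p : Mon n) {f : Mon n →₀ ℝ} (hf : SupSq f) :
    bdryR n (Phi p f) = Phi p (bdryR n f) := by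
  have := ext_sqfree ((bdryR n).comp (Phi p)) ((Phi p).comp (bdryR n)) (f := f)
    (fun q hq => by
      simp only [LinearMap.comp_apply, Phi_single]
      exact bdryR_single_mulSq p (hf q hq))
  simpa using this

lemma lapUp_comm {M : Finset (Mon n)} (hM : IsMulticomplex M) (p : Mon n) {f : Mon n →₀ ℝ}
    (hf : SupSq f) : lapUp M (Phi p f) = Phi p (lapUp (Mp2 M p) f) := by
  have h1 : SupSq (upL (Mp2 M p) f) := supsq_of_mem_Mp2 supp_upL
  simp only [lapUp, LinearMap.comp_apply]
  rw [upL_comm hM p hf, bdryR_comm p h1]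

lemma lapDown_comm {M : Finset (Mon n)} (hM : IsMulticomplex M) (p : Mon n) {f : Mon n →₀ ℝ}
    (hf : SupSq f) : lapDown M (Phi p f) = Phi p (lapDown (Mp2 M p) f) := by
  simp only [lapDown, LinearMap.comp_apply]
  rw [bdryR_comm p hf, upL_comm hM p (supp_bdryR hf)]

lemma supsq_lapUp {M : Finset (Mon n)} (p : Mon n) {f : Mon n →₀ ℝ} (_hf : SupSq f) :
    SupSq (lapUp (Mp2 M p) f) := by
  simp only [lapUp, LinearMap.comp_apply]
  exact supp_bdryR (supsq_of_mem_Mp2 supp_upL)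

lemma supsq_lapDown {M : Finset (Mon n)} (p : Mon n) {f : Mon n →₀ ℝ} (_hf : SupSq f) :
    SupSq (lapDown (Mp2 M p) f) := by
  simp only [lapDown, LinearMap.comp_apply]
  exact supsq_of_mem_Mp2 supp_upL

lemma supsq_add {f g : Mon n →₀ ℝ} (hf : SupSq f) (hg : SupSq g) : SupSq (f + g) := by
  intro m hm
  rcases Finset.mem_union.1 (Finsupp.support_add hm) with h | h
  · exact hf m h
  · exact hg m h

end Aux
namespace Aux
variable {n : ℕ}

lemma supp_Phi_half {p : Mon n} {f : Mon n →₀ ℝ} (hf : SupSq f) :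
    ∀ m ∈ (Phi p f).support, half m = p := by
  classical
  intro m hm
  have h2 : m ∈ f.support.image (mulSq p) := Finsupp.mapDomain_support hm
  obtain ⟨q, hq, rfl⟩ := Finset.mem_image.1 h2
  exact half_mulSq p (hf q hq)

lemma mem_eig_iff {A : (Mon n →₀ ℝ) →ₗ[ℝ] (Mon n →₀ ℝ)} {μ : ℝ} {f : Mon n →₀ ℝ} :
    f ∈ LinearMap.ker (A - μ • LinearMap.id) ↔ A f = μ • f := by
  rw [LinearMap.mem_ker, LinearMap.sub_apply, LinearMap.smul_apply, LinearMap.id_apply,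
    sub_eq_zero]

lemma disj_piece_eq {S : Finset (Mon n)} {g h : {x // x ∈ S} → (Mon n →₀ ℝ)}
    (hg : ∀ p, ∀ m ∈ (g p).support, half m = p.1)
    (hh : ∀ p, ∀ m ∈ (h p).support, half m = p.1)
    (heq : ∑ p, g p = ∑ p, h p) (p : {x // x ∈ S}) : g p = h p := by
  ext m
  by_cases hm : half m = p.1
  · have h1 : ∑ p' : {x // x ∈ S}, (g p') m = ∑ p' : {x // x ∈ S}, (h p') m := by
      rw [← Finsupp.finset_sum_apply, ← Finsupp.finset_sum_apply, heq]
    rwa [Finset.sum_eq_single p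
        (fun b _ hbp => by
          by_contra hc
          exact hbp (Subtype.ext ((hg b m (Finsupp.mem_support_iff.2 hc)).symm.trans hm)))
        (fun hmem => absurd (Finset.mem_univ p) hmem),
      Finset.sum_eq_single p
        (fun b _ hbp => by
          by_contra hc
          exact hbp (Subtype.ext ((hh b m (Finsupp.mem_support_iff.2 hc)).symm.trans hm)))
        (fun hmem => absurd (Finset.mem_univ p) hmem)] at h1
  · have h1 : (g p) m = 0 := by
      by_contra hc
      exact hm (hg p m (Finsupp.mem_support_iff.2 hc))
    have h2 : (h p) m = 0 := by
      by_contra hc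
      exact hm (hh p m (Finsupp.mem_support_iff.2 hc))
    rw [h1, h2]

set_option maxHeartbeats 2000000 in
lemma key {M : Finset (Mon n)} (hM : IsMulticomplex M) (i : ℕ) (μ : ℝ)
    (T : Finset (Mon n) → ((Mon n →₀ ℝ) →ₗ[ℝ] (Mon n →₀ ℝ)))
    (hcomm : ∀ (p : Mon n) (f : Mon n →₀ ℝ), SupSq f → T M (Phi p f) = Phi p (T (Mp2 M p) f))
    (hpres : ∀ (p : Mon n) (f : Mon n →₀ ℝ), SupSq f → SupSq (T (Mp2 M p) f)) :
    multOf M i (T M) μ =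
      ∑ p ∈ sqrts M, if 2 * tdeg p ≤ i
        then multOf (Mp2 M p) (i - 2 * tdeg p) (T (Mp2 M p)) μ else 0 := by
  classical
  rw [← Finset.sum_filter]
  set S : Finset (Mon n) := (sqrts M).filter (fun p => 2 * tdeg p ≤ i) with hSdef
  set E : Submodule ℝ (Mon n →₀ ℝ) :=
    LinearMap.ker (T M - μ • LinearMap.id) ⊓ Vdeg M i with hEdef
  set Ep : Mon n → Submodule ℝ (Mon n →₀ ℝ) :=
    fun p => LinearMap.ker (T (Mp2 M p) - μ • LinearMap.id) ⊓
      Vdeg (Mp2 M p) (i - 2 * tdeg p) with hEpdef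
  -- basic facts about elements of `Ep p`
  have hEpfacts : ∀ p : Mon n, ∀ v ∈ Ep p,
      (∀ m ∈ v.support, m ∈ Mdeg (Mp2 M p) (i - 2 * tdeg p)) ∧ SupSq v := by
    intro p v hv
    have h1 := mem_Vdeg.1 (Submodule.mem_inf.1 hv).2
    exact ⟨h1, fun m hm => Mp2_sqFree (Finset.mem_filter.1 (h1 m hm)).1⟩
  -- image of a member of `Ep p` lies in `E`
  have hPhiE : ∀ p ∈ S, ∀ v ∈ Ep p, Phi p v ∈ E := by
    intro p hp v hv
    have hfacts := hEpfacts p v hv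
    refine Submodule.mem_inf.2 ⟨?_, ?_⟩
    · rw [mem_eig_iff, hcomm p v hfacts.2,
        mem_eig_iff.1 (Submodule.mem_inf.1 hv).1, map_smul]
    · refine mem_Vdeg.2 ?_
      intro m hm
      have h2 : m ∈ v.support.image (mulSq p) := Finsupp.mapDomain_support hm
      obtain ⟨q, hq, rfl⟩ := Finset.mem_image.1 h2
      have hq2 := Finset.mem_filter.1 (hfacts.1 q hq)
      refine Finset.mem_filter.2 ⟨Mp2_mulSq_mem hq2.1, ?_⟩
      have hple := (Finset.mem_filter.1 hp).2
      rw [tdeg_mulSq, hq2.2]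
      omega
  -- the assembling linear map
  set F0 : (∀ p : {x // x ∈ S}, ↥(Ep p.1)) →ₗ[ℝ] (Mon n →₀ ℝ) :=
    ∑ p : {x // x ∈ S}, (Phi p.1) ∘ₗ (Ep p.1).subtype ∘ₗ LinearMap.proj p with hF0def
  have hF0 : ∀ u, F0 u = ∑ p : {x // x ∈ S}, Phi p.1 (u p : Mon n →₀ ℝ) := by
    intro u
    rw [hF0def, LinearMap.sum_apply]
    rfl
  -- injectivity
  have hker : ∀ u, F0 u = 0 → u = 0 := by
    intro u hu
    have hpieces : ∀ p : {x // x ∈ S},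
        (fun p : {x // x ∈ S} => Phi p.1 (u p : Mon n →₀ ℝ)) p =
        (fun _ : {x // x ∈ S} => (0 : Mon n →₀ ℝ)) p := by
      intro p
      refine disj_piece_eq (g := fun p : {x // x ∈ S} => Phi p.1 (u p : Mon n →₀ ℝ))
        (h := fun _ : {x // x ∈ S} => (0 : Mon n →₀ ℝ))
        (fun p m hm => supp_Phi_half (hEpfacts p.1 _ (u p).2).2 m hm)
        (fun p m hm => by simp at hm) ?_ p
      rw [← hF0 u, hu]
      simp
    funext p
    have h0 : Phi p.1 (u p : Mon n →₀ ℝ) = 0 := hpieces p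
    have h1 : (u p : Mon n →₀ ℝ) = 0 := Phi_injective p.1 (by rw [h0, map_zero])
    exact Subtype.ext (by simp [h1])
  have hinj : Function.Injective F0 := by
    intro a b hab
    have h1 : F0 (a - b) = 0 := (map_sub F0 a b).trans (by rw [hab, sub_self])
    have h2 := hker _ h1
    exact eq_of_sub_eq_zero h2
  -- surjectivity onto E
  have hsurj : ∀ v ∈ E, ∃ u, F0 u = v := by
    intro v hv
    have hvker := (Submodule.mem_inf.1 hv).1
    have hvdeg := mem_Vdeg.1 (Submodule.mem_inf.1 hv).2
    set vp : Mon n → (Mon n →₀ ℝ) := fun p => v.filter (fun m => half m = p) with hvpdef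
    set up : Mon n → (Mon n →₀ ℝ) :=
      fun p => Finsupp.comapDomain (mulSq p) (vp p) (mulSq_injective p).injOn with hupdef
    have hsupvp : ∀ p : Mon n, ∀ m ∈ (vp p).support, half m = p := by
      intro p m hm
      rw [hvpdef] at hm
      simp only [Finsupp.support_filter, Finset.mem_filter] at hm
      exact hm.2
    have hup_apply : ∀ p q, up p q = (vp p) (mulSq p q) := by
      intro p q
      rw [hupdef]
      rfl
    -- (a)
    have hPhiup : ∀ p, Phi p (up p) = vp p := by
      intro p
      rw [Phi_apply, hupdef]
      refine Finsupp.mapDomain_comapDomain (f := mulSq p) (mulSq_injective p) _ ?_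
      intro m hm
      have h1 := hsupvp p m hm
      exact ⟨par m, by rw [← h1, mulSq_half_par]⟩
    -- (b), (c)
    have hsupup : ∀ p, ∀ q ∈ (up p).support,
        half (mulSq p q) = p ∧ mulSq p q ∈ v.support := by
      intro p q hq
      rw [Finsupp.mem_support_iff, hup_apply, hvpdef] at hq
      simp only [Finsupp.filter_apply] at hq
      by_cases hc : half (mulSq p q) = p
      · refine ⟨hc, Finsupp.mem_support_iff.2 ?_⟩
        rwa [if_pos hc] at hq
      · rw [if_neg hc] at hq
        exact absurd rfl hq
    have hsupsq_up : ∀ p, SupSq (up p) := by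
      intro p q hq
      exact sqfree_of_half_mulSq (hsupup p q hq).1
    -- (d)
    have hupdeg : ∀ p, ∀ q ∈ (up p).support, q ∈ Mdeg (Mp2 M p) (i - 2 * tdeg p) := by
      intro p q hq
      obtain ⟨h1, h2⟩ := hsupup p q hq
      have hmem : mulSq p q ∈ Mdeg M i := hvdeg _ h2
      have hmem2 := Finset.mem_filter.1 hmem
      have hqM : mulSq p q ∈ M := hmem2.1
      have hdeg : tdeg (mulSq p q) = i := hmem2.2
      rw [tdeg_mulSq] at hdeg
      refine Finset.mem_filter.2 ⟨Finset.mem_filter.2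
        ⟨hM q _ (mdvd_mulSq p q) hqM, hsupsq_up p q hq, hqM⟩, by omega⟩
    -- (e) decomposition of v
    have hhalfS : ∀ m ∈ v.support, half m ∈ S := by
      intro m hm
      have hmem := Finset.mem_filter.1 (hvdeg m hm)
      refine Finset.mem_filter.2 ⟨half_mem_sqrts hM hmem.1, ?_⟩
      have : tdeg (mulSq (half m) (par m)) = i := by rw [mulSq_half_par]; exact hmem.2
      rw [tdeg_mulSq] at this
      omega
    have hdecomp : ∑ p : {x // x ∈ S}, vp p.1 = v := by
      ext m
      rw [Finsupp.finset_sum_apply]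
      by_cases hm : v m = 0
      · rw [hm]
        refine Finset.sum_eq_zero fun p _ => ?_
        rw [hvpdef]
        simp [Finsupp.filter_apply, hm]
      · have hmS : half m ∈ S := hhalfS m (Finsupp.mem_support_iff.2 hm)
        rw [Finset.sum_eq_single (⟨half m, hmS⟩ : {x // x ∈ S})
          (fun b _ hbp => by
            rw [hvpdef]
            simp only [Finsupp.filter_apply]
            rw [if_neg (fun hc => hbp (Subtype.ext hc.symm))])
          (fun hmem => absurd (Finset.mem_univ _) hmem)]
        rw [hvpdef]
        simp [Finsupp.filter_apply]
    -- (f) each piece is an eigenvector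
    have hTvp : ∀ p : {x // x ∈ S},
        (fun p : {x // x ∈ S} => T M (vp p.1)) p =
        (fun p : {x // x ∈ S} => μ • vp p.1) p := by
      refine fun p => disj_piece_eq (g := fun p : {x // x ∈ S} => T M (vp p.1))
        (h := fun p : {x // x ∈ S} => μ • vp p.1) ?_ ?_ ?_ p
      · intro p m hm
        have hm' : m ∈ (T M (vp p.1)).support := hm
        rw [← hPhiup p.1, hcomm p.1 _ (hsupsq_up p.1)] at hm'
        exact supp_Phi_half (hpres p.1 _ (hsupsq_up p.1)) m hm'
      · intro p m hm
        have hm' : m ∈ (μ • vp p.1).support := hm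
        exact hsupvp p.1 m (Finsupp.support_smul hm')
      · rw [← map_sum, hdecomp, mem_eig_iff.1 hvker, ← Finset.smul_sum, hdecomp]
    -- (g) assemble u
    have hTup : ∀ p : {x // x ∈ S}, T (Mp2 M p.1) (up p.1) = μ • up p.1 := by
      intro p
      apply Phi_injective p.1
      rw [← hcomm p.1 _ (hsupsq_up p.1), hPhiup p.1, map_smul, hPhiup p.1]
      have := hTvp p
      simpa using this
    refine ⟨fun p => ⟨up p.1, Submodule.mem_inf.2
      ⟨mem_eig_iff.2 (hTup p), mem_Vdeg.2 (hupdeg p.1)⟩⟩, ?_⟩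
    rw [hF0]
    simp only
    rw [← hdecomp]
    exact Finset.sum_congr rfl fun p _ => hPhiup p.1
  -- range F0 = E
  have hrange : LinearMap.range F0 = E := by
    apply le_antisymm
    · rintro x ⟨u, rfl⟩
      rw [hF0]
      exact Submodule.sum_mem _ fun p _ => hPhiE p.1 p.2 _ (u p).2
    · intro v hv
      obtain ⟨u, hu⟩ := hsurj v hv
      exact ⟨u, hu⟩
  -- finite dimensionality
  haveI hfinV : ∀ N : Finset (Mon n), ∀ d : ℕ, FiniteDimensional ℝ ↥(Vdeg N d) := by
    intro N d
    exact FiniteDimensional.span_of_finite ℝ ((Finset.finite_toSet _).image _)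
  haveI hfinEp : ∀ p : {x // x ∈ S}, FiniteDimensional ℝ ↥(Ep p.1) := by
    intro p
    exact Submodule.finiteDimensional_of_le inf_le_right
  -- finite dimensionality
  haveI hfinV : ∀ N : Finset (Mon n), ∀ d : ℕ, FiniteDimensional ℝ ↥(Vdeg N d) := by
    intro N d
    exact FiniteDimensional.span_of_finite ℝ ((Finset.finite_toSet _).image _)
  haveI hfinEp : ∀ p : {x // x ∈ S}, FiniteDimensional ℝ ↥(Ep p.1) := by
    intro p
    exact Submodule.finiteDimensional_of_le (inf_le_right.trans_eq rfl)
  haveI hfreeEp : ∀ p : {x // x ∈ S}, Module.Free ℝ ↥(Ep p.1) := fun p =>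
    Module.Free.of_divisionRing ℝ ↥(Ep p.1)
  -- conclude
  have hstep1 : multOf M i (T M) μ = Module.finrank ℝ ↥E := rfl
  have hstep2 : Module.finrank ℝ ↥E = Module.finrank ℝ ↥(LinearMap.range F0) := by
    rw [hrange]
  have hstep3 : Module.finrank ℝ ↥(LinearMap.range F0) =
      Module.finrank ℝ (∀ p : {x // x ∈ S}, ↥(Ep p.1)) :=
    (LinearEquiv.ofInjective F0 hinj).finrank_eq.symm
  have hstep4 : Module.finrank ℝ (∀ p : {x // x ∈ S}, ↥(Ep p.1)) =
      ∑ p : {x // x ∈ S}, Module.finrank ℝ ↥(Ep p.1) :=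
    Module.finrank_pi_fintype ℝ (M := fun p : {x // x ∈ S} => ↥(Ep p.1))
  have hstep5 : ∑ p : {x // x ∈ S}, Module.finrank ℝ ↥(Ep p.1) =
      ∑ p ∈ S, Module.finrank ℝ ↥(Ep p) :=
    Finset.sum_coe_sort S (fun p => Module.finrank ℝ ↥(Ep p))
  have hstep6 : ∀ p : Mon n, Module.finrank ℝ ↥(Ep p) =
      multOf (Mp2 M p) (i - 2 * tdeg p) (T (Mp2 M p)) μ := fun p => rfl
  rw [hstep1, hstep2, hstep3, hstep4, hstep5]
  exact Finset.sum_congr rfl fun p _ => hstep6 p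

end Aux
theorem spectrum_splits {n : ℕ} (M : Finset (Mon n)) (hM : IsMulticomplex M)
    (i : ℕ) (μ : ℝ) (hμ : μ ≠ 0) :
    multL' M i μ = (∑ p ∈ sqrts M,
        if 2 * tdeg p ≤ i then multL' (Mp2 M p) (i - 2 * tdeg p) μ else 0) ∧
    multL'' M i μ = (∑ p ∈ sqrts M,
        if 2 * tdeg p ≤ i then multL'' (Mp2 M p) (i - 2 * tdeg p) μ else 0) ∧
    multL M i μ = (∑ p ∈ sqrts M,
        if 2 * tdeg p ≤ i then multL (Mp2 M p) (i - 2 * tdeg p) μ else 0) := by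
  refine ⟨?_, ?_, ?_⟩
  · exact Aux.key hM i μ (fun N => lapUp N)
      (fun p f hf => Aux.lapUp_comm hM p hf)
      (fun p f hf => Aux.supsq_lapUp (M := M) p hf)
  · exact Aux.key hM i μ (fun N => lapDown N)
      (fun p f hf => Aux.lapDown_comm hM p hf)
      (fun p f hf => Aux.supsq_lapDown (M := M) p hf)
  · refine Aux.key hM i μ (fun N => lapUp N + lapDown N) ?_ ?_
    · intro p f hf
      simp only [LinearMap.add_apply]
      rw [Aux.lapUp_comm hM p hf, Aux.lapDown_comm hM p hf, map_add]
    · intro p f hf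
      exact Aux.supsq_add (Aux.supsq_lapUp (M := M) p hf) (Aux.supsq_lapDown (M := M) p hf)
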